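/- arXiv:1107.4636 — 4 statements merged into one kernel-verified Lean document; each statement's English description precedes it below -/
import Mathlib

section
/- For every positive integer m, the real Lie algebra 𝔤 = ℝ^m ⊕ ℂ^{m+1} with basis {z_k}_{1≤k≤m} ∪ {e_i, f_i}_{1≤i≤m+1} (f_i = √−1 e_i) and nonzero brackets [e_i, f_j] = z_{i+j−1}, [z_k, e_i] = f_{i+k}, [z_k, f_j] = −e_{k+j} (with z_ℓ = e_q = f_q = 0 for ℓ > m, q > m+1) is a Lie algebra, i.e., the bracket is antisymmetric and satisfies the Jacobi identity. -/
open scoped BigOperators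

/-- The underlying vector space `ℝ^m ⊕ ℂ^{m+1}` of the Kath–Olbrich Lie algebra.
The real basis is `{z_k} ∪ {e_i} ∪ {f_i}` where `z_k` (for `1 ≤ k ≤ m`, stored with
0-based index `k-1`) spans the `k`-th `ℝ`-coordinate, and `e_i`, `f_i = √-1 e_i`
(for `1 ≤ i ≤ m+1`, stored with 0-based index `i-1`) span the `i`-th `ℂ`-coordinate. -/
def KO (m : ℕ) : Type :=
  (Fin m → ℝ) × (Fin (m + 1) → ℂ)

noncomputable instance (m : ℕ) : AddCommGroup (KO m) := by unfold KO; infer_instance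
noncomputable instance (m : ℕ) : Module ℝ (KO m) := by unfold KO; infer_instance

/-- The basis vector `z_k` (0-based index). -/
noncomputable def koZ {m : ℕ} (k : Fin m) : KO m := (Pi.single k 1, 0)

/-- The basis vector `e_i` (0-based index). -/
noncomputable def koE {m : ℕ} (i : Fin (m + 1)) : KO m := (0, Pi.single i 1)

/-- The basis vector `f_i = √-1 e_i` (0-based index). -/
noncomputable def koF {m : ℕ} (i : Fin (m + 1)) : KO m := (0, Pi.single i Complex.I)

/-- The Kath–Olbrich bracket on `ℝ^m ⊕ ℂ^{m+1}`, extended bilinearly from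
`[e_i, f_j] = z_{i+j-1}`, `[z_k, e_i] = f_{i+k}`, `[z_k, f_j] = -e_{k+j}` (with
out-of-range indices giving `0`).  In closed form (0-based indices): the `ℝ^m`-component
of `[(z,w),(z',w')]` at index `κ` is `∑_{a+b=κ} Im(conj(w_a) w'_b)`, and the
`ℂ^{m+1}`-component at index `b` is `√-1 (∑_{κ+a+1=b} (z_κ w'_a − z'_κ w_a))`. -/
noncomputable def koBracket {m : ℕ} (x y : KO m) : KO m :=
  (fun k => ∑ a : Fin (m + 1), ∑ b : Fin (m + 1),
      if (a : ℕ) + (b : ℕ) = (k : ℕ) then ((starRingEnd ℂ) (x.2 a) * y.2 b).im else 0,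
   fun b => Complex.I *
      ((∑ κ : Fin m, ∑ a : Fin (m + 1),
          if (κ : ℕ) + (a : ℕ) + 1 = (b : ℕ) then (x.1 κ : ℂ) * y.2 a else 0) -
       (∑ κ : Fin m, ∑ a : Fin (m + 1),
          if (κ : ℕ) + (a : ℕ) + 1 = (b : ℕ) then (y.1 κ : ℂ) * x.2 a else 0)))


open Finset

lemma sum_range_ite_eq {M : Type*} [AddCommMonoid M] (n u : ℕ) (C : ℕ → Prop)
    [DecidablePred C] (X : M) (h : C u → u < n) :
    (∑ i ∈ Finset.range n, if C i then (if u = i then X else 0) else 0)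
      = if C u then X else 0 := by
  by_cases hC : C u
  · rw [Finset.sum_eq_single u]
    · simp [hC]
    · intro b _ hb; split_ifs with h1 h2 <;> simp_all
    · intro hu; exact absurd (Finset.mem_range.2 (h hC)) hu
  · rw [if_neg hC, Finset.sum_eq_zero]
    intro b _; split_ifs with h1 h2 <;> simp_all

lemma cyc3 {M : Type*} [AddCommMonoid M] (s : Finset ℕ) (F : ℕ → ℕ → ℕ → M) :
    (∑ a ∈ s, ∑ b ∈ s, ∑ c ∈ s, F a b c) = ∑ a ∈ s, ∑ b ∈ s, ∑ c ∈ s, F b c a :=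
  calc (∑ a ∈ s, ∑ b ∈ s, ∑ c ∈ s, F a b c)
      = ∑ a ∈ s, ∑ c ∈ s, ∑ b ∈ s, F a b c :=
        Finset.sum_congr rfl fun _ _ => Finset.sum_comm
    _ = ∑ c ∈ s, ∑ a ∈ s, ∑ b ∈ s, F a b c := Finset.sum_comm

lemma cyc3' {M : Type*} [AddCommMonoid M] (s : Finset ℕ) (F : ℕ → ℕ → ℕ → M) :
    (∑ a ∈ s, ∑ b ∈ s, ∑ c ∈ s, F a b c) = ∑ a ∈ s, ∑ b ∈ s, ∑ c ∈ s, F c a b :=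
  calc (∑ a ∈ s, ∑ b ∈ s, ∑ c ∈ s, F a b c)
      = ∑ b ∈ s, ∑ a ∈ s, ∑ c ∈ s, F a b c := Finset.sum_comm
    _ = ∑ b ∈ s, ∑ c ∈ s, ∑ a ∈ s, F a b c :=
        Finset.sum_congr rfl fun _ _ => Finset.sum_comm

noncomputable def Wf {m : ℕ} (x : KO m) : ℕ → ℂ :=
  fun n => if h : n < m + 1 then x.2 ⟨n, h⟩ else 0

noncomputable def Zf {m : ℕ} (x : KO m) : ℕ → ℝ :=
  fun n => if h : n < m then x.1 ⟨n, h⟩ else 0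

lemma Wf_coe {m : ℕ} (x : KO m) (a : Fin (m + 1)) : Wf x (a : ℕ) = x.2 a := by
  simp [Wf, a.isLt]

lemma Zf_coe {m : ℕ} (x : KO m) (a : Fin m) : Zf x (a : ℕ) = x.1 a := by
  simp [Zf, a.isLt]

lemma Zf_smul_add {m : ℕ} (c : ℝ) (x x' : KO m) (n : ℕ) :
    Zf (c • x + x') n = c * Zf x n + Zf x' n := by
  unfold Zf; split_ifs <;> [exact rfl; simp [KO]]

lemma Wf_smul_add {m : ℕ} (c : ℝ) (x x' : KO m) (n : ℕ) :
    Wf (c • x + x') n = (c : ℂ) * Wf x n + Wf x' n := by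
  unfold Wf; split_ifs with h
  · show ((c • x + x').2 _ = _)
    have : (c • x + x').2 = c • x.2 + x'.2 := rfl
    rw [this]; simp [Complex.real_smul]
  · simp

lemma koBracket_fst {m : ℕ} (x y : KO m) (k : Fin m) :
    (koBracket x y).1 k = ∑ a ∈ range (m+1), ∑ b ∈ range (m+1),
      if a + b = (k : ℕ) then ((starRingEnd ℂ) (Wf x a) * Wf y b).im else 0 := by
  show (∑ a : Fin (m + 1), ∑ b : Fin (m + 1), _) = _
  rw [← Fin.sum_univ_eq_sum_range (fun a => ∑ b ∈ range (m+1),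
      if a + b = (k : ℕ) then ((starRingEnd ℂ) (Wf x a) * Wf y b).im else 0)]
  refine Finset.sum_congr rfl fun a _ => ?_
  rw [← Fin.sum_univ_eq_sum_range (fun b =>
      if (a : ℕ) + b = (k : ℕ) then ((starRingEnd ℂ) (Wf x (a:ℕ)) * Wf y b).im else 0)]
  refine Finset.sum_congr rfl fun b _ => ?_
  rw [Wf_coe, Wf_coe]

lemma koBracket_snd {m : ℕ} (x y : KO m) (b : Fin (m + 1)) :
    (koBracket x y).2 b = Complex.I *
      ((∑ κ ∈ range (m+1), ∑ a ∈ range (m+1),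
          if κ + a + 1 = (b : ℕ) then (Zf x κ : ℂ) * Wf y a else 0) -
       (∑ κ ∈ range (m+1), ∑ a ∈ range (m+1),
          if κ + a + 1 = (b : ℕ) then (Zf y κ : ℂ) * Wf x a else 0)) := by
  show Complex.I * _ = _
  have key : ∀ u v : KO m,
      (∑ κ : Fin m, ∑ a : Fin (m + 1),
          if (κ : ℕ) + (a : ℕ) + 1 = (b : ℕ) then (u.1 κ : ℂ) * v.2 a else 0)
        = ∑ κ ∈ range (m+1), ∑ a ∈ range (m+1),
          if κ + a + 1 = (b : ℕ) then (Zf u κ : ℂ) * Wf v a else 0 := by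
    intro u v
    rw [Finset.sum_range_succ]
    have hz : Zf u m = 0 := by simp [Zf]
    simp only [hz, Complex.ofReal_zero, zero_mul, ite_self, Finset.sum_const_zero, add_zero]
    rw [← Fin.sum_univ_eq_sum_range (fun κ => ∑ a ∈ range (m+1),
        if κ + a + 1 = (b : ℕ) then (Zf u κ : ℂ) * Wf v a else 0)]
    refine Finset.sum_congr rfl fun κ _ => ?_
    rw [← Fin.sum_univ_eq_sum_range (fun a =>
        if (κ:ℕ) + a + 1 = (b : ℕ) then (Zf u (κ:ℕ) : ℂ) * Wf v a else 0)]
    refine Finset.sum_congr rfl fun a _ => ?_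
    rw [Zf_coe, Wf_coe]
  rw [key x y, key y x]

lemma sum2_split {M : Type*} [CommRing M] (s t : Finset ℕ) (P : ℕ → ℕ → Prop)
    [∀ a b, Decidable (P a b)] (c : M) (f g : ℕ → ℕ → M) :
    (∑ a ∈ s, ∑ b ∈ t, if P a b then c * f a b + g a b else 0)
      = c * (∑ a ∈ s, ∑ b ∈ t, if P a b then f a b else 0)
        + ∑ a ∈ s, ∑ b ∈ t, if P a b then g a b else 0 := by
  rw [Finset.mul_sum, ← Finset.sum_add_distrib]
  refine Finset.sum_congr rfl fun a _ => ?_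
  rw [Finset.mul_sum, ← Finset.sum_add_distrib]
  refine Finset.sum_congr rfl fun b _ => ?_
  split_ifs <;> ring


-- Wf/Zf of a bracket
lemma Wf_koBracket {m : ℕ} (x y : KO m) (n : ℕ) (h : n < m + 1) :
    Wf (koBracket x y) n = Complex.I *
      ((∑ κ ∈ range (m+1), ∑ a ∈ range (m+1),
          if κ + a + 1 = n then (Zf x κ : ℂ) * Wf y a else 0) -
       (∑ κ ∈ range (m+1), ∑ a ∈ range (m+1),
          if κ + a + 1 = n then (Zf y κ : ℂ) * Wf x a else 0)) := by
  have : Wf (koBracket x y) n = (koBracket x y).2 ⟨n, h⟩ := by simp [Wf, h]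
  rw [this, koBracket_snd]

lemma Zf_koBracket {m : ℕ} (x y : KO m) (n : ℕ) (h : n < m) :
    Zf (koBracket x y) n = ∑ p ∈ range (m+1), ∑ q ∈ range (m+1),
      if p + q = n then ((starRingEnd ℂ) (Wf x p) * Wf y q).im else 0 := by
  have : Zf (koBracket x y) n = (koBracket x y).1 ⟨n, h⟩ := by simp [Zf, h]
  rw [this, koBracket_fst]

lemma elim_shape {M : Type*} [AddCommMonoid M] (n : ℕ) (C : ℕ → Prop) [DecidablePred C]
    (e : ℕ → ℕ → ℕ) (h : ∀ l c, C (e l c) → e l c < n) (g : ℕ → ℕ → M) :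
    (∑ i ∈ range n, if C i then
        (∑ l ∈ range n, ∑ c ∈ range n, if e l c = i then g l c else 0) else 0)
      = ∑ l ∈ range n, ∑ c ∈ range n, if C (e l c) then g l c else 0 := by
  have h1 : ∀ i, (if C i then
      (∑ l ∈ range n, ∑ c ∈ range n, if e l c = i then g l c else 0) else 0)
      = ∑ l ∈ range n, ∑ c ∈ range n, (if C i then (if e l c = i then g l c else 0) else 0) := by
    intro i; split_ifs <;> simp
  simp only [h1]
  rw [cyc3' (range n) (fun i l c => if C i then (if e l c = i then g l c else 0) else 0)]
  exact Finset.sum_congr rfl fun l _ => Finset.sum_congr rfl fun c _ =>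
    sum_range_ite_eq n (e l c) C (g l c) (h l c)

lemma inner_comb {m : ℕ} (y z : KO m) (b : ℕ) (hb : b < m + 1) :
    Wf (koBracket y z) b = ∑ l ∈ range (m+1), ∑ c ∈ range (m+1),
      if l + c + 1 = b then Complex.I * ((Zf y l : ℂ) * Wf z c - (Zf z l : ℂ) * Wf y c) else 0 := by
  rw [Wf_koBracket _ _ b hb, ← Finset.sum_sub_distrib, Finset.mul_sum]
  refine Finset.sum_congr rfl fun l _ => ?_
  rw [← Finset.sum_sub_distrib, Finset.mul_sum]
  refine Finset.sum_congr rfl fun c _ => ?_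
  split_ifs <;> simp

lemma jac_fst {m : ℕ} (x y z : KO m) (k : Fin m) :
    (koBracket x (koBracket y z)).1 k
      = ∑ a ∈ range (m+1), ∑ l ∈ range (m+1), ∑ c ∈ range (m+1),
          if a + l + c + 1 = (k : ℕ) then
            ((starRingEnd ℂ) (Wf x a) *
              (Complex.I * ((Zf y l : ℂ) * Wf z c - (Zf z l : ℂ) * Wf y c))).im
          else 0 := by
  rw [koBracket_fst]
  refine Finset.sum_congr rfl fun a _ => ?_
  have h1 : ∀ b ∈ range (m+1),
      (if a + b = (k:ℕ) then ((starRingEnd ℂ) (Wf x a) * Wf (koBracket y z) b).im else 0)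
      = if a + b = (k:ℕ) then
          (∑ l ∈ range (m+1), ∑ c ∈ range (m+1), if l + c + 1 = b then
            ((starRingEnd ℂ) (Wf x a) *
              (Complex.I * ((Zf y l : ℂ) * Wf z c - (Zf z l : ℂ) * Wf y c))).im else 0) else 0 := by
    intro b hb
    rw [inner_comb y z b (mem_range.1 hb), Finset.mul_sum, Complex.im_sum]
    congr 1
    refine Finset.sum_congr rfl fun l _ => ?_
    rw [Finset.mul_sum, Complex.im_sum]
    refine Finset.sum_congr rfl fun c _ => ?_
    split_ifs <;> simp
  rw [Finset.sum_congr rfl h1,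
    elim_shape (m+1) (fun i => a + i = (k:ℕ)) (fun l c => l + c + 1)
      (fun l c h => by have := k.isLt; omega) _]
  refine Finset.sum_congr rfl fun l _ => Finset.sum_congr rfl fun c _ => ?_
  exact if_congr (by omega) rfl rfl

lemma jac_snd_A {m : ℕ} (x y z : KO m) (b : Fin (m+1)) :
    (∑ κ ∈ range (m+1), ∑ a ∈ range (m+1),
        if κ + a + 1 = (b:ℕ) then (Zf x κ : ℂ) * Wf (koBracket y z) a else 0)
      = ∑ κ ∈ range (m+1), ∑ l ∈ range (m+1), ∑ c ∈ range (m+1),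
          if κ + l + c + 2 = (b:ℕ) then
            (Zf x κ : ℂ) * (Complex.I * ((Zf y l : ℂ) * Wf z c - (Zf z l : ℂ) * Wf y c))
          else 0 := by
  refine Finset.sum_congr rfl fun κ _ => ?_
  have h1 : ∀ a ∈ range (m+1),
      (if κ + a + 1 = (b:ℕ) then (Zf x κ : ℂ) * Wf (koBracket y z) a else 0)
      = if κ + a + 1 = (b:ℕ) then
          (∑ l ∈ range (m+1), ∑ c ∈ range (m+1), if l + c + 1 = a then
            (Zf x κ : ℂ) * (Complex.I * ((Zf y l : ℂ) * Wf z c - (Zf z l : ℂ) * Wf y c))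
          else 0) else 0 := by
    intro a ha
    rw [inner_comb y z a (mem_range.1 ha), Finset.mul_sum]
    congr 1
    refine Finset.sum_congr rfl fun l _ => ?_
    rw [Finset.mul_sum]
    refine Finset.sum_congr rfl fun c _ => ?_
    split_ifs <;> simp
  rw [Finset.sum_congr rfl h1,
    elim_shape (m+1) (fun i => κ + i + 1 = (b:ℕ)) (fun l c => l + c + 1)
      (fun l c h => by have := b.isLt; omega) _]
  exact Finset.sum_congr rfl fun l _ => Finset.sum_congr rfl fun c _ =>
    if_congr (by omega) rfl rfl

lemma jac_snd_B {m : ℕ} (x y z : KO m) (b : Fin (m+1)) :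
    (∑ κ ∈ range (m+1), ∑ a ∈ range (m+1),
        if κ + a + 1 = (b:ℕ) then (Zf (koBracket y z) κ : ℂ) * Wf x a else 0)
      = ∑ a ∈ range (m+1), ∑ p ∈ range (m+1), ∑ q ∈ range (m+1),
          if p + q + a + 1 = (b:ℕ) then
            (((starRingEnd ℂ) (Wf y p) * Wf z q).im : ℂ) * Wf x a
          else 0 := by
  rw [Finset.sum_comm]
  refine Finset.sum_congr rfl fun a _ => ?_
  have h1 : ∀ κ ∈ range (m+1),
      (if κ + a + 1 = (b:ℕ) then (Zf (koBracket y z) κ : ℂ) * Wf x a else 0)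
      = if κ + a + 1 = (b:ℕ) then
          (∑ p ∈ range (m+1), ∑ q ∈ range (m+1), if p + q = κ then
            (((starRingEnd ℂ) (Wf y p) * Wf z q).im : ℂ) * Wf x a else 0) else 0 := by
    intro κ _
    split_ifs with h
    · have hκ : κ < m := by have := b.isLt; omega
      rw [Zf_koBracket _ _ κ hκ]
      push_cast
      rw [Finset.sum_mul]
      refine Finset.sum_congr rfl fun p _ => ?_
      rw [Finset.sum_mul]
      refine Finset.sum_congr rfl fun q _ => ?_
      split_ifs <;> simp
    · rfl
  rw [Finset.sum_congr rfl h1,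
    elim_shape (m+1) (fun i => i + a + 1 = (b:ℕ)) (fun p q => p + q)
      (fun p q h => by have := b.isLt; omega) _]

lemma jac_snd {m : ℕ} (x y z : KO m) (b : Fin (m+1)) :
    (koBracket x (koBracket y z)).2 b = Complex.I *
      ((∑ κ ∈ range (m+1), ∑ l ∈ range (m+1), ∑ c ∈ range (m+1),
          if κ + l + c + 2 = (b:ℕ) then
            (Zf x κ : ℂ) * (Complex.I * ((Zf y l : ℂ) * Wf z c - (Zf z l : ℂ) * Wf y c))
          else 0) -
       (∑ a ∈ range (m+1), ∑ p ∈ range (m+1), ∑ q ∈ range (m+1),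
          if p + q + a + 1 = (b:ℕ) then
            (((starRingEnd ℂ) (Wf y p) * Wf z q).im : ℂ) * Wf x a
          else 0)) := by
  rw [koBracket_snd, jac_snd_A, jac_snd_B]

lemma sum3_add {M : Type*} [AddCommMonoid M] (s : Finset ℕ) (f g : ℕ → ℕ → ℕ → M) :
    ((∑ a ∈ s, ∑ b ∈ s, ∑ c ∈ s, f a b c) + ∑ a ∈ s, ∑ b ∈ s, ∑ c ∈ s, g a b c)
      = ∑ a ∈ s, ∑ b ∈ s, ∑ c ∈ s, (f a b c + g a b c) := by
  rw [← Finset.sum_add_distrib]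
  refine Finset.sum_congr rfl fun a _ => ?_
  rw [← Finset.sum_add_distrib]
  exact Finset.sum_congr rfl fun b _ => (Finset.sum_add_distrib).symm

lemma rev3' {M : Type*} [AddCommMonoid M] (s : Finset ℕ) (F : ℕ → ℕ → ℕ → M) :
    (∑ a ∈ s, ∑ b ∈ s, ∑ c ∈ s, F a b c) = ∑ a ∈ s, ∑ b ∈ s, ∑ c ∈ s, F c b a :=
  calc (∑ a ∈ s, ∑ b ∈ s, ∑ c ∈ s, F a b c)
      = ∑ b ∈ s, ∑ a ∈ s, ∑ c ∈ s, F a b c := Finset.sum_comm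
    _ = ∑ b ∈ s, ∑ c ∈ s, ∑ a ∈ s, F a b c :=
        Finset.sum_congr rfl fun _ _ => Finset.sum_comm
    _ = ∑ c ∈ s, ∑ b ∈ s, ∑ a ∈ s, F a b c := Finset.sum_comm

lemma key3 (u v t : ℂ) :
    (((starRingEnd ℂ) v * t).im : ℂ) * u + (((starRingEnd ℂ) t * u).im : ℂ) * v
      + (((starRingEnd ℂ) u * v).im : ℂ) * t = 0 := by
  simp [Complex.ext_iff, Complex.mul_im, Complex.mul_re]; constructor <;> ring


/-- For every positive integer `m`, the Kath–Olbrich bracket on `ℝ^m ⊕ ℂ^{m+1}` makes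
it a (real) Lie algebra: the bracket is bilinear, antisymmetric (in particular
alternating) and satisfies the Jacobi identity.  Moreover it takes the prescribed
values on the basis: `[e_i, f_j] = z_{i+j-1}`, `[z_k, e_i] = f_{i+k}`,
`[z_k, f_j] = -e_{k+j}` (indices `1`-based in the mathematical notation, `0`-based
here, out-of-range indices giving `0`). -/
theorem koBracket_lieAlgebra (m : ℕ) (hm : 0 < m) :
    (∀ (c : ℝ) (x x' y : KO m),
      koBracket (c • x + x') y = c • koBracket x y + koBracket x' y) ∧
    (∀ (c : ℝ) (x y y' : KO m),
      koBracket x (c • y + y') = c • koBracket x y + koBracket x y') ∧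
    (∀ x y : KO m, koBracket x y = -koBracket y x) ∧
    (∀ x y z : KO m,
      koBracket x (koBracket y z) + koBracket y (koBracket z x) +
        koBracket z (koBracket x y) = 0) := by
  refine ⟨?_, ?_, ?_, ?_⟩
  ·
    intro c x x' y
    refine Prod.ext (funext fun k => ?_) (funext fun b => ?_)
    · have hR : (c • koBracket x y + koBracket x' y).1 k
          = c * (koBracket x y).1 k + (koBracket x' y).1 k := rfl
      rw [hR, koBracket_fst, koBracket_fst, koBracket_fst]
      have e : ∀ a b : ℕ, (if a + b = (k:ℕ) then ((starRingEnd ℂ) (Wf (c • x + x') a) * Wf y b).im else 0)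
          = if a + b = (k:ℕ) then c * ((starRingEnd ℂ) (Wf x a) * Wf y b).im
              + ((starRingEnd ℂ) (Wf x' a) * Wf y b).im else 0 := by
        intro a b
        rw [Wf_smul_add]
        split_ifs with h
        · simp [Complex.add_im, Complex.mul_im, map_add, map_mul, Complex.conj_ofReal, add_mul]
          ring
        · rfl
      simp only [e]
      rw [sum2_split]
    · have hC : (c • koBracket x y + koBracket x' y).2 b
          = (c:ℂ) * (koBracket x y).2 b + (koBracket x' y).2 b := by
        show c • (koBracket x y).2 b + (koBracket x' y).2 b = _
        rw [Complex.real_smul]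
      rw [hC, koBracket_snd, koBracket_snd, koBracket_snd]
      have e1 : ∀ κ a : ℕ, (if κ + a + 1 = (b:ℕ) then (Zf (c • x + x') κ : ℂ) * Wf y a else 0)
          = if κ + a + 1 = (b:ℕ) then (c:ℂ) * ((Zf x κ : ℂ) * Wf y a) + (Zf x' κ : ℂ) * Wf y a else 0 := by
        intro κ a; rw [Zf_smul_add]; split_ifs <;> [push_cast; skip] <;> ring
      have e2 : ∀ κ a : ℕ, (if κ + a + 1 = (b:ℕ) then (Zf y κ : ℂ) * Wf (c • x + x') a else 0)
          = if κ + a + 1 = (b:ℕ) then (c:ℂ) * ((Zf y κ : ℂ) * Wf x a) + (Zf y κ : ℂ) * Wf x' a else 0 := by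
        intro κ a; rw [Wf_smul_add]; split_ifs <;> [push_cast; skip] <;> ring
      simp only [e1, e2]
      rw [sum2_split, sum2_split]
      ring


  ·
    intro c x y y'
    refine Prod.ext (funext fun k => ?_) (funext fun b => ?_)
    · have hR : (c • koBracket x y + koBracket x y').1 k
          = c * (koBracket x y).1 k + (koBracket x y').1 k := rfl
      rw [hR, koBracket_fst, koBracket_fst, koBracket_fst]
      have e : ∀ a b : ℕ, (if a + b = (k:ℕ) then ((starRingEnd ℂ) (Wf x a) * Wf (c • y + y') b).im else 0)
          = if a + b = (k:ℕ) then c * ((starRingEnd ℂ) (Wf x a) * Wf y b).im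
              + ((starRingEnd ℂ) (Wf x a) * Wf y' b).im else 0 := by
        intro a b
        rw [Wf_smul_add]
        split_ifs with h
        · simp [Complex.add_im, Complex.mul_im, mul_add]
          ring
        · rfl
      simp only [e]
      rw [sum2_split]
    · have hC : (c • koBracket x y + koBracket x y').2 b
          = (c:ℂ) * (koBracket x y).2 b + (koBracket x y').2 b := by
        show c • (koBracket x y).2 b + (koBracket x y').2 b = _
        rw [Complex.real_smul]
      rw [hC, koBracket_snd, koBracket_snd, koBracket_snd]
      have e1 : ∀ κ a : ℕ, (if κ + a + 1 = (b:ℕ) then (Zf x κ : ℂ) * Wf (c • y + y') a else 0)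
          = if κ + a + 1 = (b:ℕ) then (c:ℂ) * ((Zf x κ : ℂ) * Wf y a) + (Zf x κ : ℂ) * Wf y' a else 0 := by
        intro κ a; rw [Wf_smul_add]; split_ifs <;> [push_cast; skip] <;> ring
      have e2 : ∀ κ a : ℕ, (if κ + a + 1 = (b:ℕ) then (Zf (c • y + y') κ : ℂ) * Wf x a else 0)
          = if κ + a + 1 = (b:ℕ) then (c:ℂ) * ((Zf y κ : ℂ) * Wf x a) + (Zf y' κ : ℂ) * Wf x a else 0 := by
        intro κ a; rw [Zf_smul_add]; split_ifs <;> [push_cast; skip] <;> ring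
      simp only [e1, e2]
      rw [sum2_split, sum2_split]
      ring


  ·
    intro x y
    refine Prod.ext (funext fun k => ?_) (funext fun b => ?_)
    · have hR : (-koBracket y x).1 k = -((koBracket y x).1 k) := rfl
      rw [hR, koBracket_fst, koBracket_fst]
      have : -(∑ a ∈ range (m+1), ∑ b ∈ range (m+1),
            if a + b = (k:ℕ) then ((starRingEnd ℂ) (Wf y a) * Wf x b).im else 0)
          = ∑ b ∈ range (m+1), ∑ a ∈ range (m+1),
            (-(if a + b = (k:ℕ) then ((starRingEnd ℂ) (Wf y a) * Wf x b).im else 0)) := by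
        rw [Finset.sum_comm]; simp
      rw [this]
      refine Finset.sum_congr rfl fun a _ => Finset.sum_congr rfl fun b _ => ?_
      split_ifs with h1 h2 h2
      · simp [Complex.mul_im]; ring
      · omega
      · omega
      · simp
    · have hC : (-koBracket y x).2 b = -((koBracket y x).2 b) := rfl
      rw [hC, koBracket_snd, koBracket_snd]
      ring

  ·
    intro x y z
    refine Prod.ext (funext fun k => ?_) (funext fun b => ?_)
    · show (koBracket x (koBracket y z)).1 k + (koBracket y (koBracket z x)).1 k
          + (koBracket z (koBracket x y)).1 k = 0
      rw [jac_fst x y z, jac_fst y z x, jac_fst z x y, sum3_add, sum3_add]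
      set s := range (m+1)
      set F : ℕ → ℕ → ℕ → ℝ := fun a l c =>
        ((if a + l + c + 1 = (k : ℕ) then
            ((starRingEnd ℂ) (Wf x a) *
              (Complex.I * ((Zf y l : ℂ) * Wf z c - (Zf z l : ℂ) * Wf y c))).im else 0)
          + (if a + l + c + 1 = (k : ℕ) then
            ((starRingEnd ℂ) (Wf y a) *
              (Complex.I * ((Zf z l : ℂ) * Wf x c - (Zf x l : ℂ) * Wf z c))).im else 0))
          + (if a + l + c + 1 = (k : ℕ) then
            ((starRingEnd ℂ) (Wf z a) *
              (Complex.I * ((Zf x l : ℂ) * Wf y c - (Zf y l : ℂ) * Wf x c))).im else 0)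
        with hF
      show (∑ a ∈ s, ∑ l ∈ s, ∑ c ∈ s, F a l c) = 0
      have hrev : (∑ a ∈ s, ∑ l ∈ s, ∑ c ∈ s, F a l c)
          = ∑ a ∈ s, ∑ l ∈ s, ∑ c ∈ s, F c l a := rev3' s F
      have hneg : ∀ a l c : ℕ, F c l a = - F a l c := by
        intro a l c
        simp only [hF]
        by_cases h : a + l + c + 1 = (k : ℕ)
        · rw [if_pos h, if_pos h, if_pos h, if_pos (by omega), if_pos (by omega),
            if_pos (by omega)]
          simp only [Complex.mul_im, Complex.mul_re, Complex.sub_re, Complex.sub_im,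
            Complex.I_re, Complex.I_im, Complex.ofReal_re, Complex.ofReal_im,
            RCLike.star_def, Complex.conj_re, Complex.conj_im]
          ring
        · rw [if_neg h, if_neg h, if_neg h, if_neg (by omega), if_neg (by omega),
            if_neg (by omega)]
          simp
      have h2 : (∑ a ∈ s, ∑ l ∈ s, ∑ c ∈ s, F a l c)
          = - ∑ a ∈ s, ∑ l ∈ s, ∑ c ∈ s, F a l c := by
        nth_rewrite 1 [hrev]
        have : (∑ a ∈ s, ∑ l ∈ s, ∑ c ∈ s, F c l a)
            = ∑ a ∈ s, ∑ l ∈ s, ∑ c ∈ s, (- F a l c) :=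
          Finset.sum_congr rfl fun a _ => Finset.sum_congr rfl fun l _ =>
            Finset.sum_congr rfl fun c _ => hneg a l c
        rw [this]
        simp
      linarith
    · show (koBracket x (koBracket y z)).2 b + (koBracket y (koBracket z x)).2 b
          + (koBracket z (koBracket x y)).2 b = 0
      rw [jac_snd x y z, jac_snd y z x, jac_snd z x y]
      set s := range (m+1)
      have hA :
          ((∑ κ ∈ s, ∑ l ∈ s, ∑ c ∈ s,
            if κ + l + c + 2 = (b:ℕ) then
              (Zf x κ : ℂ) * (Complex.I * ((Zf y l : ℂ) * Wf z c - (Zf z l : ℂ) * Wf y c)) else 0)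
          + (∑ κ ∈ s, ∑ l ∈ s, ∑ c ∈ s,
            if κ + l + c + 2 = (b:ℕ) then
              (Zf y κ : ℂ) * (Complex.I * ((Zf z l : ℂ) * Wf x c - (Zf x l : ℂ) * Wf z c)) else 0))
          + (∑ κ ∈ s, ∑ l ∈ s, ∑ c ∈ s,
            if κ + l + c + 2 = (b:ℕ) then
              (Zf z κ : ℂ) * (Complex.I * ((Zf x l : ℂ) * Wf y c - (Zf y l : ℂ) * Wf x c)) else 0)
          = 0 := by
        rw [sum3_add, sum3_add]
        set G : ℕ → ℕ → ℕ → ℂ := fun κ l c =>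
          ((if κ + l + c + 2 = (b:ℕ) then
              (Zf x κ : ℂ) * (Complex.I * ((Zf y l : ℂ) * Wf z c - (Zf z l : ℂ) * Wf y c)) else 0)
          + (if κ + l + c + 2 = (b:ℕ) then
              (Zf y κ : ℂ) * (Complex.I * ((Zf z l : ℂ) * Wf x c - (Zf x l : ℂ) * Wf z c)) else 0))
          + (if κ + l + c + 2 = (b:ℕ) then
              (Zf z κ : ℂ) * (Complex.I * ((Zf x l : ℂ) * Wf y c - (Zf y l : ℂ) * Wf x c)) else 0)
          with hG
        show (∑ κ ∈ s, ∑ l ∈ s, ∑ c ∈ s, G κ l c) = 0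
        have hsw : (∑ κ ∈ s, ∑ l ∈ s, ∑ c ∈ s, G κ l c)
            = ∑ κ ∈ s, ∑ l ∈ s, ∑ c ∈ s, G l κ c := Finset.sum_comm
        have hneg : ∀ κ l c : ℕ, G l κ c = - G κ l c := by
          intro κ l c
          simp only [hG]
          by_cases h : κ + l + c + 2 = (b:ℕ)
          · rw [if_pos h, if_pos h, if_pos h, if_pos (by omega), if_pos (by omega),
              if_pos (by omega)]
            ring
          · rw [if_neg h, if_neg h, if_neg h, if_neg (by omega), if_neg (by omega),
              if_neg (by omega)]
            simp
        have h2 : (∑ κ ∈ s, ∑ l ∈ s, ∑ c ∈ s, G κ l c)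
            = - ∑ κ ∈ s, ∑ l ∈ s, ∑ c ∈ s, G κ l c := by
          nth_rewrite 1 [hsw]
          have : (∑ κ ∈ s, ∑ l ∈ s, ∑ c ∈ s, G l κ c)
              = ∑ κ ∈ s, ∑ l ∈ s, ∑ c ∈ s, (- G κ l c) :=
            Finset.sum_congr rfl fun κ _ => Finset.sum_congr rfl fun l _ =>
              Finset.sum_congr rfl fun c _ => hneg κ l c
          rw [this]
          simp
        linear_combination h2 / 2
      have hB :
          ((∑ a ∈ s, ∑ p ∈ s, ∑ q ∈ s,
            if p + q + a + 1 = (b:ℕ) then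
              (((starRingEnd ℂ) (Wf y p) * Wf z q).im : ℂ) * Wf x a else 0)
          + (∑ a ∈ s, ∑ p ∈ s, ∑ q ∈ s,
            if p + q + a + 1 = (b:ℕ) then
              (((starRingEnd ℂ) (Wf z p) * Wf x q).im : ℂ) * Wf y a else 0))
          + (∑ a ∈ s, ∑ p ∈ s, ∑ q ∈ s,
            if p + q + a + 1 = (b:ℕ) then
              (((starRingEnd ℂ) (Wf x p) * Wf y q).im : ℂ) * Wf z a else 0)
          = 0 := by
        rw [cyc3 s (fun a p q =>
            if p + q + a + 1 = (b:ℕ) then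
              (((starRingEnd ℂ) (Wf z p) * Wf x q).im : ℂ) * Wf y a else 0),
          cyc3' s (fun a p q =>
            if p + q + a + 1 = (b:ℕ) then
              (((starRingEnd ℂ) (Wf x p) * Wf y q).im : ℂ) * Wf z a else 0),
          sum3_add, sum3_add]
        rw [Finset.sum_eq_zero]
        intro a _
        rw [Finset.sum_eq_zero]
        intro p _
        rw [Finset.sum_eq_zero]
        intro q _
        by_cases h : p + q + a + 1 = (b:ℕ)
        · rw [if_pos h, if_pos (by omega : q + a + p + 1 = (b:ℕ)),
            if_pos (by omega : a + p + q + 1 = (b:ℕ))]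
          exact key3 (Wf x a) (Wf y p) (Wf z q)
        · rw [if_neg h, if_neg (by omega : ¬ q + a + p + 1 = (b:ℕ)),
            if_neg (by omega : ¬ a + p + q + 1 = (b:ℕ))]
          simp
      linear_combination Complex.I * hA - Complex.I * hB
end

section
/- The Lie algebra 𝔤 = ℝ^m ⊕ ℂ^{m+1} of Kath–Olbrich (with brackets [e_i,f_j]=z_{i+j−1}, [z_k,e_i]=f_{i+k}, [z_k,f_j]=−e_{k+j}) is exactly (2m+1)-step nilpotent: the lower central series satisfies 𝔤^{2m+1} = 0 while 𝔤^{2m} ≠ 0. In particular, 𝔤^{2r−1} is spanned by {z_k : r ≤ k ≤ m} ∪ {e_i, f_i : r+1 ≤ i ≤ m+1} and 𝔤^{2r} is spanned by {z_k : r+1 ≤ k ≤ m} ∪ {e_i, f_i : r+1 ≤ i ≤ m+1}. -/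
open scoped BigOperators

/-- The lower central series `𝔤^0 = 𝔤`, `𝔤^{s+1} = [𝔤, 𝔤^s]` of the Kath–Olbrich
algebra, as submodules. -/
noncomputable def koLCS (m : ℕ) : ℕ → Submodule ℝ (KO m)
  | 0 => ⊤
  | s + 1 => Submodule.span ℝ
      {u : KO m | ∃ x y : KO m, y ∈ koLCS m s ∧ u = koBracket x y}

/-- Auxiliary: the submodule of elements whose first `a` real coordinates and
first `b` complex coordinates vanish. -/
noncomputable def koW (m a b : ℕ) : Submodule ℝ (KO m) where
  carrier := {x | (∀ k : Fin m, (k : ℕ) < a → x.1 k = 0) ∧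
                  (∀ i : Fin (m + 1), (i : ℕ) < b → x.2 i = 0)}
  add_mem' := by
    rintro x y ⟨hx1, hx2⟩ ⟨hy1, hy2⟩
    refine ⟨fun k hk => ?_, fun i hi => ?_⟩
    · show x.1 k + y.1 k = 0
      rw [hx1 k hk, hy1 k hk, add_zero]
    · show x.2 i + y.2 i = 0
      rw [hx2 i hi, hy2 i hi, add_zero]
  zero_mem' := ⟨fun _ _ => rfl, fun _ _ => rfl⟩
  smul_mem' := by
    rintro c x ⟨hx1, hx2⟩
    refine ⟨fun k hk => ?_, fun i hi => ?_⟩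
    · show c • x.1 k = 0
      rw [hx1 k hk, smul_zero]
    · show c • x.2 i = 0
      rw [hx2 i hi, smul_zero]

lemma mem_koW {m a b : ℕ} {x : KO m} :
    x ∈ koW m a b ↔ (∀ k : Fin m, (k : ℕ) < a → x.1 k = 0) ∧
      (∀ i : Fin (m + 1), (i : ℕ) < b → x.2 i = 0) := Iff.rfl

def koGen (m a b : ℕ) : Set (KO m) :=
  {v | ∃ k : Fin m, a ≤ (k : ℕ) ∧ v = koZ k} ∪
  {v | ∃ i : Fin (m + 1), b ≤ (i : ℕ) ∧ (v = koE i ∨ v = koF i)}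
lemma koBracket_mem_W {m a b : ℕ} (hab : a ≤ b) (x y : KO m)
    (hy : y ∈ koW m a b) : koBracket x y ∈ koW m b (a + 1) := by
  obtain ⟨hy1, hy2⟩ := hy
  unfold koBracket
  constructor
  · intro k hk
    dsimp only
    apply Finset.sum_eq_zero
    intro α _
    apply Finset.sum_eq_zero
    intro β _
    split_ifs with h
    · rw [hy2 β (by omega), mul_zero]
      rfl
    · rfl
  · intro i hi
    dsimp only
    have h1 : (∑ κ : Fin m, ∑ α : Fin (m + 1),
        if (κ : ℕ) + (α : ℕ) + 1 = (i : ℕ) then (x.1 κ : ℂ) * y.2 α else 0) = 0 := by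
      apply Finset.sum_eq_zero; intro κ _
      apply Finset.sum_eq_zero; intro α _
      split_ifs with h
      · rw [hy2 α (by omega), mul_zero]
      · rfl
    have h2 : (∑ κ : Fin m, ∑ α : Fin (m + 1),
        if (κ : ℕ) + (α : ℕ) + 1 = (i : ℕ) then (y.1 κ : ℂ) * x.2 α else 0) = 0 := by
      apply Finset.sum_eq_zero; intro κ _
      apply Finset.sum_eq_zero; intro α _
      split_ifs with h
      · rw [hy1 κ (by omega), Complex.ofReal_zero, zero_mul]
      · rfl
    rw [h1, h2, sub_self, mul_zero]

noncomputable def koFst (m : ℕ) : KO m →ₗ[ℝ] (Fin m → ℝ) where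
  toFun := fun x => x.1
  map_add' := fun _ _ => rfl
  map_smul' := fun _ _ => rfl

noncomputable def koSnd (m : ℕ) : KO m →ₗ[ℝ] (Fin (m + 1) → ℂ) where
  toFun := fun x => x.2
  map_add' := fun _ _ => rfl
  map_smul' := fun _ _ => rfl

lemma ko_decomp {m : ℕ} (x : KO m) :
    x = (∑ k : Fin m, x.1 k • koZ k) +
        ∑ i : Fin (m + 1), ((x.2 i).re • koE i + (x.2 i).im • koF i) := by
  have hA : (∑ k : Fin m, x.1 k • koZ k) = ((x.1, 0) : KO m) := by
    refine Prod.ext ?_ ?_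
    · show koFst m (∑ k : Fin m, x.1 k • koZ k) = x.1
      rw [map_sum]
      have h : ∀ k : Fin m, koFst m (x.1 k • koZ k) = Pi.single k (x.1 k) := by
        intro k
        show x.1 k • (Pi.single k (1:ℝ) : Fin m → ℝ) = _
        funext κ
        simp [Pi.single_apply]
      rw [Finset.sum_congr rfl (fun k _ => h k), Finset.univ_sum_single]
    · show koSnd m (∑ k : Fin m, x.1 k • koZ k) = 0
      rw [map_sum]
      apply Finset.sum_eq_zero
      intro k _
      show x.1 k • (0 : Fin (m + 1) → ℂ) = 0
      simp
  have hB : (∑ i : Fin (m + 1), ((x.2 i).re • koE i + (x.2 i).im • koF i))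
      = ((0, x.2) : KO m) := by
    refine Prod.ext ?_ ?_
    · show koFst m _ = 0
      rw [map_sum]
      apply Finset.sum_eq_zero
      intro i _
      show (x.2 i).re • (0 : Fin m → ℝ) + (x.2 i).im • (0 : Fin m → ℝ) = 0
      simp
    · show koSnd m _ = x.2
      rw [map_sum]
      have h : ∀ i : Fin (m + 1),
          koSnd m ((x.2 i).re • koE i + (x.2 i).im • koF i) = Pi.single i (x.2 i) := by
        intro i
        show (x.2 i).re • (Pi.single i (1:ℂ) : Fin (m+1) → ℂ)
            + (x.2 i).im • (Pi.single i Complex.I : Fin (m+1) → ℂ) = _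
        funext j
        simp only [Pi.add_apply, Pi.smul_apply, Pi.single_apply]
        by_cases hji : j = i
        · simp [hji, Complex.real_smul, Complex.re_add_im]
        · simp [hji]
      rw [Finset.sum_congr rfl (fun i _ => h i), Finset.univ_sum_single]
  rw [hA, hB]
  refine Prod.ext ?_ ?_
  · show x.1 = x.1 + 0
    simp
  · show x.2 = 0 + x.2
    simp

lemma koW_eq_span (m a b : ℕ) : koW m a b = Submodule.span ℝ (koGen m a b) := by
  apply le_antisymm
  · intro x hx
    obtain ⟨h1, h2⟩ := hx
    rw [ko_decomp x]
    refine Submodule.add_mem _ (Submodule.sum_mem _ fun k _ => ?_)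
      (Submodule.sum_mem _ fun i _ => ?_)
    · by_cases hk : (k : ℕ) < a
      · rw [h1 k hk, zero_smul]
        exact Submodule.zero_mem _
      · exact Submodule.smul_mem _ _ (Submodule.subset_span (Or.inl ⟨k, by omega, rfl⟩))
    · by_cases hi : (i : ℕ) < b
      · rw [h2 i hi]
        simp only [Complex.zero_re, Complex.zero_im, zero_smul, add_zero]
        exact Submodule.zero_mem _
      · exact Submodule.add_mem _
          (Submodule.smul_mem _ _ (Submodule.subset_span (Or.inr ⟨i, by omega, Or.inl rfl⟩)))
          (Submodule.smul_mem _ _ (Submodule.subset_span (Or.inr ⟨i, by omega, Or.inr rfl⟩)))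
  · rw [Submodule.span_le]
    rintro v (⟨k, hk, rfl⟩ | ⟨i, hi, (rfl | rfl)⟩)
    · unfold koZ
      refine ⟨fun κ hκ => ?_, fun j _ => rfl⟩
      dsimp only
      apply Pi.single_eq_of_ne
      intro hh; rw [hh] at hκ; omega
    · unfold koE
      refine ⟨fun κ _ => rfl, fun j hj => ?_⟩
      dsimp only
      apply Pi.single_eq_of_ne
      intro hh; rw [hh] at hj; omega
    · unfold koF
      refine ⟨fun κ _ => rfl, fun j hj => ?_⟩
      dsimp only
      apply Pi.single_eq_of_ne
      intro hh; rw [hh] at hj; omega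

set_option maxRecDepth 8000

lemma koBracket_E_F (m : ℕ) (k : Fin m) :
    koBracket (koE (0 : Fin (m + 1))) (koF k.castSucc) = koZ k := by
  unfold koBracket koE koF koZ
  refine Prod.ext (funext fun κ => ?_) (funext fun i => by simp)
  dsimp only
  rw [Finset.sum_eq_single (0 : Fin (m+1)), Finset.sum_eq_single (Fin.castSucc k)]
  · simp [Pi.single_apply, Fin.ext_iff, eq_comm]
  · intro b _ hb
    simp [Pi.single_eq_of_ne hb]
  · simp
  · intro a _ ha
    apply Finset.sum_eq_zero
    intro b _
    simp [Pi.single_eq_of_ne ha]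
  · simp

lemma koBracket_F_Z (m : ℕ) (κ : Fin m) :
    koBracket (koF (0 : Fin (m + 1))) (koZ κ) = koE κ.succ := by
  unfold koBracket koE koF koZ
  refine Prod.ext (funext fun k => by simp) (funext fun i => ?_)
  dsimp only
  simp only [Pi.zero_apply, Complex.ofReal_zero, zero_mul, mul_zero, ite_self,
    Finset.sum_const_zero, zero_sub]
  rw [Finset.sum_eq_single κ, Finset.sum_eq_single (0 : Fin (m+1))]
  · by_cases h : (κ : ℕ) + ((0 : Fin (m+1)) : ℕ) + 1 = (i : ℕ)
    · obtain rfl : i = κ.succ := by ext; simpa using h.symm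
      rw [if_pos h]
      simp [Complex.ext_iff]
    · have hne : i ≠ κ.succ := by
        intro hh; apply h; rw [hh]; simp
      rw [if_neg h, Pi.single_eq_of_ne hne]
      simp
  · intro b _ hb
    simp [Pi.single_eq_of_ne hb]
  · simp
  · intro a _ ha
    apply Finset.sum_eq_zero
    intro b _
    simp [Pi.single_eq_of_ne ha]
  · simp

lemma koBracket_E_Z (m : ℕ) (κ : Fin m) :
    koBracket (koE (0 : Fin (m + 1))) (koZ κ) = -(koF κ.succ) := by
  have hneg : -(koF κ.succ) = ((0, Pi.single κ.succ (-Complex.I)) : KO m) := by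
    refine Prod.ext (funext fun k => ?_) (funext fun i => ?_)
    · show -((0 : Fin m → ℝ) k) = 0
      simp
    · show -((Pi.single κ.succ Complex.I : Fin (m+1) → ℂ) i) = _
      simp [Pi.single_apply, apply_ite (fun z : ℂ => -z)]
  rw [hneg]
  unfold koBracket koE koZ
  refine Prod.ext (funext fun k => by simp) (funext fun i => ?_)
  dsimp only
  simp only [Pi.zero_apply, Complex.ofReal_zero, zero_mul, mul_zero, ite_self,
    Finset.sum_const_zero, zero_sub]
  rw [Finset.sum_eq_single κ, Finset.sum_eq_single (0 : Fin (m+1))]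
  · by_cases h : (κ : ℕ) + ((0 : Fin (m+1)) : ℕ) + 1 = (i : ℕ)
    · obtain rfl : i = κ.succ := by ext; simpa using h.symm
      rw [if_pos h]
      simp [Complex.ext_iff]
    · have hne : i ≠ κ.succ := by
        intro hh; apply h; rw [hh]; simp
      rw [if_neg h, Pi.single_eq_of_ne hne]
      simp
  · intro b _ hb
    simp [Pi.single_eq_of_ne hb]
  · simp
  · intro a _ ha
    apply Finset.sum_eq_zero
    intro b _
    simp [Pi.single_eq_of_ne ha]
  · simp

lemma koZ_mem_W {m : ℕ} (κ : Fin m) {a b : ℕ} (hκ : a ≤ (κ : ℕ)) :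
    koZ κ ∈ koW m a b := by
  unfold koZ
  refine ⟨fun k hk => ?_, fun j _ => rfl⟩
  dsimp only
  apply Pi.single_eq_of_ne
  intro hh; rw [hh] at hk; omega

lemma koF_mem_W {m : ℕ} (i : Fin (m + 1)) {a b : ℕ} (hi : b ≤ (i : ℕ)) :
    koF i ∈ koW m a b := by
  unfold koF
  refine ⟨fun k _ => rfl, fun j hj => ?_⟩
  dsimp only
  apply Pi.single_eq_of_ne
  intro hh; rw [hh] at hj; omega

lemma koLCS_succ_eq {m s a b : ℕ} (hab : a ≤ b)
    (h : koLCS m s = koW m a b) : koLCS m (s + 1) = koW m b (a + 1) := by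
  show Submodule.span ℝ {u : KO m | ∃ x y : KO m, y ∈ koLCS m s ∧ u = koBracket x y} = _
  apply le_antisymm
  · rw [Submodule.span_le]
    rintro v ⟨x, y, hy, rfl⟩
    rw [h] at hy
    exact koBracket_mem_W hab x y hy
  · rw [koW_eq_span, Submodule.span_le]
    rintro v (⟨k, hk, rfl⟩ | ⟨i, hi, (rfl | rfl)⟩)
    · apply Submodule.subset_span
      exact ⟨koE 0, koF k.castSucc,
        by rw [h]; exact koF_mem_W _ (by simpa using hk),
        (koBracket_E_F m k).symm⟩
    · -- koE i with a + 1 ≤ i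
      have h1 : 1 ≤ (i : ℕ) := by omega
      have hlt : (i : ℕ) - 1 < m := by omega
      set κ : Fin m := ⟨(i : ℕ) - 1, hlt⟩ with hκ
      have hsucc : κ.succ = i := by ext; simp [hκ]; omega
      apply Submodule.subset_span
      refine ⟨koF 0, koZ κ, by rw [h]; exact koZ_mem_W κ (by simp [hκ]; omega), ?_⟩
      rw [koBracket_F_Z, hsucc]
    · -- koF i with a + 1 ≤ i
      have h1 : 1 ≤ (i : ℕ) := by omega
      have hlt : (i : ℕ) - 1 < m := by omega
      set κ : Fin m := ⟨(i : ℕ) - 1, hlt⟩ with hκ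
      have hsucc : κ.succ = i := by ext; simp [hκ]; omega
      have hmem : koBracket (koE 0) (koZ κ) ∈ Submodule.span ℝ
          {u : KO m | ∃ x y : KO m, y ∈ koLCS m s ∧ u = koBracket x y} :=
        Submodule.subset_span ⟨koE 0, koZ κ, by rw [h]; exact koZ_mem_W κ (by simp [hκ]; omega), rfl⟩
      rw [koBracket_E_Z, hsucc] at hmem
      simpa using Submodule.neg_mem _ hmem

lemma koLCS_eq_koW (m : ℕ) : ∀ s, koLCS m s = koW m (s / 2) ((s + 1) / 2)
  | 0 => by
      show (⊤ : Submodule ℝ (KO m)) = _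
      refine le_antisymm (fun x _ => ⟨fun k hk => absurd hk (by omega), fun i hi => absurd hi (by omega)⟩) le_top
  | (s + 1) => by
      have h := koLCS_succ_eq (a := s / 2) (b := (s + 1) / 2) (by omega) (koLCS_eq_koW m s)
      rw [h]
      congr 1
      omega

lemma koW_bot (m : ℕ) : koW m m (m + 1) = ⊥ := by
  rw [eq_bot_iff]
  rintro x ⟨h1, h2⟩
  rw [Submodule.mem_bot]
  refine Prod.ext (funext fun k => ?_) (funext fun i => ?_)
  · exact (h1 k k.isLt).trans rfl
  · exact (h2 i i.isLt).trans rfl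

lemma koE_ne_zero {m : ℕ} (i : Fin (m + 1)) : koE i ≠ 0 := by
  intro h
  have h2 : (koE i).2 i = (0 : KO m).2 i := by rw [h]
  unfold koE at h2
  dsimp only at h2
  rw [Pi.single_eq_same] at h2
  exact one_ne_zero h2

/-- The Kath–Olbrich Lie algebra `𝔤 = ℝ^m ⊕ ℂ^{m+1}` is exactly `(2m+1)`-step
nilpotent: `𝔤^{2m+1} = 0` while `𝔤^{2m} ≠ 0`; moreover for `1 ≤ r ≤ m`, the term
`𝔤^{2r-1}` is spanned by `{z_k : r ≤ k ≤ m} ∪ {e_i, f_i : r+1 ≤ i ≤ m+1}` and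
`𝔤^{2r}` is spanned by `{z_k : r+1 ≤ k ≤ m} ∪ {e_i, f_i : r+1 ≤ i ≤ m+1}`
(1-based indices; here stored 0-based). -/
theorem koLCS_nilpotency (m : ℕ) (hm : 0 < m) :
    koLCS m (2 * m + 1) = ⊥ ∧ koLCS m (2 * m) ≠ ⊥ ∧
    ∀ r : ℕ, 1 ≤ r → r ≤ m →
      (koLCS m (2 * r - 1) = Submodule.span ℝ
        ({v : KO m | ∃ k : Fin m, r ≤ (k : ℕ) + 1 ∧ v = koZ k} ∪
         {v : KO m | ∃ i : Fin (m + 1), r + 1 ≤ (i : ℕ) + 1 ∧ (v = koE i ∨ v = koF i)})) ∧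
      (koLCS m (2 * r) = Submodule.span ℝ
        ({v : KO m | ∃ k : Fin m, r + 1 ≤ (k : ℕ) + 1 ∧ v = koZ k} ∪
         {v : KO m | ∃ i : Fin (m + 1), r + 1 ≤ (i : ℕ) + 1 ∧ (v = koE i ∨ v = koF i)})) := by
  refine ⟨?_, ?_, ?_⟩
  · rw [koLCS_eq_koW]
    have e1 : (2 * m + 1) / 2 = m := by omega
    have e2 : (2 * m + 1 + 1) / 2 = m + 1 := by omega
    rw [e1, e2, koW_bot]
  · rw [koLCS_eq_koW]
    have e1 : (2 * m) / 2 = m := by omega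
    have e2 : (2 * m + 1) / 2 = m := by omega
    rw [e1, e2]
    intro hbot
    have hmem : koE (Fin.last m) ∈ koW m m m := by
      unfold koE
      refine ⟨fun k _ => rfl, fun j hj => ?_⟩
      dsimp only
      apply Pi.single_eq_of_ne
      intro hh
      rw [hh] at hj
      simp [Fin.last] at hj
    rw [hbot, Submodule.mem_bot] at hmem
    exact koE_ne_zero _ hmem
  · intro r hr1 hrm
    constructor
    · rw [koLCS_eq_koW]
      have e1 : (2 * r - 1) / 2 = r - 1 := by omega
      have e2 : (2 * r - 1 + 1) / 2 = r := by omega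
      rw [e1, e2, koW_eq_span]
      congr 1
      unfold koGen
      congr 1
      · ext v
        constructor <;> rintro ⟨k, hk, rfl⟩ <;> exact ⟨k, by omega, rfl⟩
      · ext v
        constructor <;> rintro ⟨i, hi, hv⟩ <;> exact ⟨i, by omega, hv⟩
    · rw [koLCS_eq_koW]
      have e1 : (2 * r) / 2 = r := by omega
      have e2 : (2 * r + 1) / 2 = r := by omega
      rw [e1, e2, koW_eq_span]
      congr 1
      unfold koGen
      congr 1
      · ext v
        constructor <;> rintro ⟨k, hk, rfl⟩ <;> exact ⟨k, by omega, rfl⟩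
      · ext v
        constructor <;> rintro ⟨i, hi, hv⟩ <;> exact ⟨i, by omega, hv⟩
end

section
/- On the Kath–Olbrich Lie algebra 𝔤 = ℝ^m ⊕ ℂ^{m+1}, the symmetric bilinear form defined by ⟨e_i, e_j⟩ = ⟨f_i, f_j⟩ = δ_{i+j, m+2}, ⟨z_k, z_ℓ⟩ = δ_{k+ℓ, m+1}, ⟨e_i, f_j⟩ = 0, and ℝ^m ⊥ ℂ^{m+1}, is nondegenerate and invariant: ⟨[x,y], z⟩ = ⟨x, [y,z]⟩ for all x, y, z ∈ 𝔤. -/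
open scoped BigOperators

/-- The Kath–Olbrich scalar product on `𝔤 = ℝ^m ⊕ ℂ^{m+1}`:
`⟨e_i, e_j⟩ = ⟨f_i, f_j⟩ = δ_{i+j,m+2}`, `⟨z_k, z_ℓ⟩ = δ_{k+ℓ,m+1}`, `⟨e_i, f_j⟩ = 0`
and `ℝ^m ⊥ ℂ^{m+1}`.  In closed form (0-based indices, using `Fin.rev`):
`⟨(z,w),(z',w')⟩ = ∑_κ z_κ z'_{m-1-κ} + ∑_a Re(conj(w_a) w'_{m-a})`. -/
noncomputable def koForm {m : ℕ} (x y : KO m) : ℝ :=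
  (∑ κ : Fin m, x.1 κ * y.1 κ.rev) +
    ∑ a : Fin (m + 1), ((starRingEnd ℂ) (x.2 a) * y.2 a.rev).re

private lemma sum_rev {n : ℕ} {M : Type*} [AddCommMonoid M] (f : Fin n → M) :
    ∑ i, f i = ∑ i, f (Fin.rev i) :=
  (Fintype.sum_equiv Fin.revPerm _ _ (fun _ => rfl)).symm

private lemma lhsA {m : ℕ} (u v : Fin (m + 1) → ℂ) (ζ : Fin m → ℝ) :
    ∑ κ : Fin m, (∑ a : Fin (m + 1), ∑ b : Fin (m + 1),
        if (a : ℕ) + (b : ℕ) = (κ : ℕ) then ((starRingEnd ℂ) (u a) * v b).im else 0) * ζ κ.rev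
    = ∑ κ : Fin m, ∑ a : Fin (m + 1), ∑ b : Fin (m + 1),
        if (κ : ℕ) + (a : ℕ) + (b : ℕ) + 1 = m then
          ζ κ * ((starRingEnd ℂ) (u a) * v b).im else 0 := by
  rw [sum_rev (fun κ : Fin m => (∑ a : Fin (m + 1), ∑ b : Fin (m + 1),
        if (a : ℕ) + (b : ℕ) = (κ : ℕ) then ((starRingEnd ℂ) (u a) * v b).im else 0) * ζ κ.rev)]
  refine Finset.sum_congr rfl fun κ _ => ?_
  rw [Fin.rev_rev, Finset.sum_mul]
  refine Finset.sum_congr rfl fun a _ => ?_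
  rw [Finset.sum_mul]
  refine Finset.sum_congr rfl fun b _ => ?_
  rw [ite_mul, zero_mul]
  have hκ := κ.isLt
  have ha := a.isLt
  have hb := b.isLt
  rw [Fin.val_rev]
  exact if_congr (by omega) (mul_comm _ _) rfl

private lemma pairI_left (t w : ℂ) :
    ((starRingEnd ℂ) (Complex.I * t) * w).re = ((starRingEnd ℂ) t * w).im := by
  simp [Complex.mul_re, Complex.mul_im]; ring

private lemma pairI_right (v t : ℂ) :
    (v * (Complex.I * t)).re = -(v * t).im := by
  simp [Complex.mul_re, Complex.mul_im]; ring

private lemma im_ofReal_mul_left (r : ℝ) (z w : ℂ) :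
    ((r : ℂ) * z * w).im = r * (z * w).im := by
  rw [mul_assoc, Complex.im_ofReal_mul]

private lemma im_ofReal_mul_right (r : ℝ) (v t : ℂ) :
    (v * ((r : ℂ) * t)).im = r * (v * t).im := by
  rw [mul_left_comm, Complex.im_ofReal_mul]

private lemma lhsB1 {m : ℕ} (p : Fin m → ℝ) (v w : Fin (m + 1) → ℂ) :
    ∑ c : Fin (m + 1), ∑ κ : Fin m, ∑ a : Fin (m + 1),
        (if (κ : ℕ) + (a : ℕ) + 1 = (c : ℕ) then p κ * ((starRingEnd ℂ) (v a) * w c.rev).im else 0)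
    = ∑ κ : Fin m, ∑ a : Fin (m + 1), ∑ b : Fin (m + 1),
        if (κ : ℕ) + (a : ℕ) + (b : ℕ) + 1 = m then p κ * ((starRingEnd ℂ) (v a) * w b).im else 0 := by
  rw [sum_rev (fun c : Fin (m + 1) => ∑ κ : Fin m, ∑ a : Fin (m + 1),
      (if (κ : ℕ) + (a : ℕ) + 1 = (c : ℕ) then p κ * ((starRingEnd ℂ) (v a) * w c.rev).im else 0))]
  simp only [Fin.rev_rev]
  rw [Finset.sum_comm]
  refine Finset.sum_congr rfl fun κ _ => ?_
  rw [Finset.sum_comm]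
  refine Finset.sum_congr rfl fun a _ => Finset.sum_congr rfl fun b _ => ?_
  have hκ := κ.isLt
  have hb := b.isLt
  rw [Fin.val_rev]
  exact if_congr (by omega) rfl rfl

private lemma lhsB {m : ℕ} (p q : Fin m → ℝ) (u v w : Fin (m + 1) → ℂ) :
    ∑ c : Fin (m + 1), ((starRingEnd ℂ) (Complex.I *
        ((∑ κ : Fin m, ∑ a : Fin (m + 1),
            if (κ : ℕ) + (a : ℕ) + 1 = (c : ℕ) then (p κ : ℂ) * v a else 0) -
         (∑ κ : Fin m, ∑ a : Fin (m + 1),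
            if (κ : ℕ) + (a : ℕ) + 1 = (c : ℕ) then (q κ : ℂ) * u a else 0))) *
        w c.rev).re
    = (∑ κ : Fin m, ∑ a : Fin (m + 1), ∑ b : Fin (m + 1),
        if (κ : ℕ) + (a : ℕ) + (b : ℕ) + 1 = m then
          p κ * ((starRingEnd ℂ) (v a) * w b).im else 0)
    - (∑ κ : Fin m, ∑ a : Fin (m + 1), ∑ b : Fin (m + 1),
        if (κ : ℕ) + (a : ℕ) + (b : ℕ) + 1 = m then
          q κ * ((starRingEnd ℂ) (u a) * w b).im else 0) := by
  simp only [pairI_left]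
  simp only [map_sub, sub_mul, Complex.sub_im, map_sum,
    apply_ite (starRingEnd ℂ), map_zero, map_mul, Complex.conj_ofReal,
    Finset.sum_mul, ite_mul, zero_mul, Complex.im_sum, apply_ite Complex.im,
    Complex.zero_im, im_ofReal_mul_left]
  rw [Finset.sum_sub_distrib, lhsB1, lhsB1]

private lemma rhsA {m : ℕ} (p : Fin m → ℝ) (v w : Fin (m + 1) → ℂ) :
    ∑ κ : Fin m, p κ * (∑ a : Fin (m + 1), ∑ b : Fin (m + 1),
        if (a : ℕ) + (b : ℕ) = (κ.rev : ℕ) then ((starRingEnd ℂ) (v a) * w b).im else 0)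
    = ∑ κ : Fin m, ∑ a : Fin (m + 1), ∑ b : Fin (m + 1),
        if (κ : ℕ) + (a : ℕ) + (b : ℕ) + 1 = m then
          p κ * ((starRingEnd ℂ) (v a) * w b).im else 0 := by
  refine Finset.sum_congr rfl fun κ _ => ?_
  rw [Finset.mul_sum]
  refine Finset.sum_congr rfl fun a _ => ?_
  rw [Finset.mul_sum]
  refine Finset.sum_congr rfl fun b _ => ?_
  rw [mul_ite, mul_zero, Fin.val_rev]
  have hκ := κ.isLt
  exact if_congr (by omega) rfl rfl

private lemma rhsB1 {m : ℕ} (r : Fin m → ℝ) (u v : Fin (m + 1) → ℂ) :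
    ∑ a : Fin (m + 1), ∑ κ : Fin m, ∑ d : Fin (m + 1),
        (if (κ : ℕ) + (d : ℕ) + 1 = (a.rev : ℕ) then
          r κ * ((starRingEnd ℂ) (u a) * v d).im else 0)
    = ∑ κ : Fin m, ∑ a : Fin (m + 1), ∑ b : Fin (m + 1),
        if (κ : ℕ) + (a : ℕ) + (b : ℕ) + 1 = m then
          r κ * ((starRingEnd ℂ) (u a) * v b).im else 0 := by
  rw [Finset.sum_comm]
  refine Finset.sum_congr rfl fun κ _ => Finset.sum_congr rfl fun a _ =>
    Finset.sum_congr rfl fun b _ => ?_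
  have ha := a.isLt
  rw [Fin.val_rev]
  exact if_congr (by omega) rfl rfl

private lemma rhsB {m : ℕ} (q r : Fin m → ℝ) (u v w : Fin (m + 1) → ℂ) :
    ∑ a : Fin (m + 1), ((starRingEnd ℂ) (u a) * (Complex.I *
        ((∑ κ : Fin m, ∑ d : Fin (m + 1),
            if (κ : ℕ) + (d : ℕ) + 1 = (a.rev : ℕ) then (q κ : ℂ) * w d else 0) -
         (∑ κ : Fin m, ∑ d : Fin (m + 1),
            if (κ : ℕ) + (d : ℕ) + 1 = (a.rev : ℕ) then (r κ : ℂ) * v d else 0)))).re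
    = -(∑ κ : Fin m, ∑ a : Fin (m + 1), ∑ b : Fin (m + 1),
        if (κ : ℕ) + (a : ℕ) + (b : ℕ) + 1 = m then
          q κ * ((starRingEnd ℂ) (u a) * w b).im else 0)
    + (∑ κ : Fin m, ∑ a : Fin (m + 1), ∑ b : Fin (m + 1),
        if (κ : ℕ) + (a : ℕ) + (b : ℕ) + 1 = m then
          r κ * ((starRingEnd ℂ) (u a) * v b).im else 0) := by
  simp only [pairI_right]
  simp only [mul_sub, Complex.sub_im, Finset.mul_sum, mul_ite, mul_zero,
    Complex.im_sum, apply_ite Complex.im, Complex.zero_im, im_ofReal_mul_right,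
    neg_sub]
  rw [Finset.sum_sub_distrib, rhsB1, rhsB1, neg_add_eq_sub]

private lemma re_conj_comm (u v : ℂ) :
    ((starRingEnd ℂ) u * v).re = ((starRingEnd ℂ) v * u).re := by
  simp [Complex.mul_re]; ring

/-- The Kath–Olbrich bilinear form is symmetric, nondegenerate, and invariant
(associative with respect to the bracket): `⟨[x,y], z⟩ = ⟨x, [y,z]⟩`. -/
theorem koForm_nondegenerate_invariant (m : ℕ) (hm : 0 < m) :
    (∀ x y : KO m, koForm x y = koForm y x) ∧
    (∀ x : KO m, (∀ y : KO m, koForm x y = 0) → x = 0) ∧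
    (∀ x y z : KO m, koForm (koBracket x y) z = koForm x (koBracket y z)) := by
  refine ⟨?_, ?_, ?_⟩
  · intro x y
    unfold koForm
    congr 1
    · rw [sum_rev (fun κ : Fin m => y.1 κ * x.1 κ.rev)]
      simp only [Fin.rev_rev]
      exact Finset.sum_congr rfl fun κ _ => mul_comm _ _
    · rw [sum_rev (fun a : Fin (m + 1) =>
        ((starRingEnd ℂ) (y.2 a) * x.2 a.rev).re)]
      simp only [Fin.rev_rev]
      exact Finset.sum_congr rfl fun a _ => re_conj_comm _ _
  · intro x hx
    have h1 : ∀ k : Fin m, x.1 k = 0 := by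
      intro k
      have h := hx (koZ k.rev)
      simp only [koForm, koZ, Pi.single_apply, Fin.rev_inj, Pi.zero_apply,
        mul_zero, map_zero, zero_mul, Complex.zero_re, Finset.sum_const_zero,
        add_zero, mul_ite, mul_one, Finset.sum_ite_eq', Finset.mem_univ,
        if_true] at h
      exact h
    have h2 : ∀ k : Fin (m + 1), x.2 k = 0 := by
      intro k
      have he := hx (koE k.rev)
      have hf := hx (koF k.rev)
      simp only [koForm, koE, koF, Pi.single_apply, Fin.rev_inj, Pi.zero_apply,
        mul_zero, zero_mul, Finset.sum_const_zero, zero_add, mul_ite,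
        mul_one, apply_ite Complex.re, Complex.mul_re, Complex.zero_re,
        Complex.I_re, Complex.I_im, Complex.one_re, Complex.one_im,
        Complex.conj_re, Complex.conj_im, Finset.sum_ite_eq', Finset.mem_univ,
        if_true] at he hf
      apply Complex.ext
      · simpa using he
      · simpa using hf
    have hx1 : x.1 = 0 := funext h1
    have hx2 : x.2 = 0 := funext h2
    show x = ((0 : Fin m → ℝ), (0 : Fin (m + 1) → ℂ))
    rw [← hx1, ← hx2]
    rfl
  · intro x y z
    show koForm (koBracket x y) z = koForm x (koBracket y z)
    simp only [koForm, koBracket]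
    rw [lhsA, lhsB, rhsA, rhsB]
    ring
end

section
/- Let 𝔤 = 𝔪 + 𝔥 be a reductive decomposition for a geodesic orbit pseudo-Riemannian homogeneous space, let 𝔫 ⊆ 𝔪 be the nilradical of 𝔤, and suppose the restriction of the scalar product to [𝔫,𝔫] is positive or negative definite. If for each X ∈ 𝔪 there exists A ∈ 𝔥 with ⟨[X+A, Z]_𝔪, X⟩ = k⟨X,Z⟩ for all Z ∈ 𝔪, then 𝔫 is at most 2-step nilpotent: [𝔫,[𝔫,𝔫]] = 0. -/
/-- Let `𝔤 = 𝔪 + 𝔥` be a reductive decomposition for a geodesic orbit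
pseudo-Riemannian homogeneous space (so the scalar product `B` on `𝔪` is symmetric,
nondegenerate and `ad(𝔥)`-invariant), let `𝔫 ⊆ 𝔪` be the nilradical of `𝔤`, and
suppose the restriction of `B` to `[𝔫,𝔫]` is positive or negative definite.  If for
each `X ∈ 𝔪` there exist `A ∈ 𝔥` and `k ∈ ℝ` with
`⟨[X+A, Z]_𝔪, X⟩ = k ⟨X,Z⟩` for all `Z ∈ 𝔪` (the geodesic orbit condition), then
`𝔫` is at most 2-step nilpotent: `[𝔫, [𝔫,𝔫]] = 0`. -/
theorem nilradical_two_step_nilpotent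
    {L : Type*} [LieRing L] [LieAlgebra ℝ L] [FiniteDimensional ℝ L]
    (𝔥 : LieSubalgebra ℝ L) (𝔪 : Submodule ℝ L)
    (hcompl : IsCompl 𝔪 𝔥.toSubmodule)
    (hred : ∀ A ∈ 𝔥, ∀ X ∈ 𝔪, ⁅A, X⁆ ∈ 𝔪)
    (B : LinearMap.BilinForm ℝ L)
    (hsymm : ∀ X ∈ 𝔪, ∀ Z ∈ 𝔪, B X Z = B Z X)
    (hnondeg : ∀ X ∈ 𝔪, (∀ Z ∈ 𝔪, B X Z = 0) → X = 0)
    (hinv : ∀ A ∈ 𝔥, ∀ X ∈ 𝔪, ∀ Z ∈ 𝔪, B ⁅A, X⁆ Z + B X ⁅A, Z⁆ = 0)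
    (𝔫 : LieIdeal ℝ L) (hnil : LieRing.IsNilpotent 𝔫)
    (hmax : ∀ J : LieIdeal ℝ L, LieRing.IsNilpotent J → J ≤ 𝔫)
    (h𝔫𝔪 : LieSubmodule.toSubmodule 𝔫 ≤ 𝔪)
    (hdef : (∀ x ∈ ⁅𝔫, 𝔫⁆, x ≠ (0 : L) → 0 < B x x) ∨
            (∀ x ∈ ⁅𝔫, 𝔫⁆, x ≠ (0 : L) → B x x < 0))
    (hgo : ∀ X ∈ 𝔪, ∃ A ∈ 𝔥, ∃ k : ℝ, ∀ Z ∈ 𝔪,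
      B ((Submodule.linearProjOfIsCompl 𝔪 𝔥.toSubmodule hcompl ⁅X + A, Z⁆ : 𝔪) : L) X
        = k * B X Z) :
    ⁅𝔫, ⁅𝔫, 𝔫⁆⁆ = (⊥ : LieIdeal ℝ L) := by
  classical
  set 𝔡 : LieIdeal ℝ L := ⁅𝔫, 𝔫⁆ with h𝔡
  have hd𝔫 : 𝔡 ≤ 𝔫 := LieSubmodule.lie_le_right 𝔫 𝔫
  have hmem𝔪 : ∀ x, x ∈ 𝔫 → x ∈ 𝔪 := fun x hx => h𝔫𝔪 hx
  have hdm : ∀ x, x ∈ 𝔡 → x ∈ 𝔪 := fun x hx => hmem𝔪 x (hd𝔫 hx)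
  have hzero : ∀ w, w ∈ 𝔡 → B w w = 0 → w = 0 := by
    intro w hw hB
    by_contra hne
    rcases hdef with h | h
    · exact (h w hw hne).ne' hB
    · exact (h w hw hne).ne hB
  have hBne : ∀ u, u ∈ 𝔡 → u ≠ 0 → B u u ≠ 0 := by
    intro u hu hne
    rcases hdef with h | h
    · exact (h u hu hne).ne'
    · exact (h u hu hne).ne
  have hproj : ∀ x (hx : x ∈ 𝔪),
      ((Submodule.linearProjOfIsCompl 𝔪 𝔥.toSubmodule hcompl x : 𝔪) : L) = x := by
    intro x hx
    have h := Submodule.projectionOnto_apply_left hcompl ⟨x, hx⟩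
    exact congrArg (Subtype.val) h
  -- Lemma A : for ζ ∈ 𝔪 orthogonal to 𝔡, B ⁅ζ,u⁆ u = 0 for u ∈ 𝔡
  have hA : ∀ ζ, ζ ∈ 𝔪 → (∀ d, d ∈ 𝔡 → B ζ d = 0) → ∀ u, u ∈ 𝔡 → B ⁅ζ, u⁆ u = 0 := by
    intro ζ hζm hperp u hu
    by_cases hu0 : u = 0
    · simp [hu0]
    have hum : u ∈ 𝔪 := hdm u hu
    have hBuu : B u u ≠ 0 := hBne u hu hu0
    have hζu : ⁅ζ, u⁆ ∈ 𝔡 := 𝔡.lie_mem hu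
    have key : ∀ t : ℝ, ∃ k : ℝ, t * B ⁅ζ, u⁆ u = k * (t * B u u) ∧
        -(t * t) * B ⁅ζ, u⁆ u = k * B ζ ζ := by
      intro t
      have hXm : ζ + t • u ∈ 𝔪 := Submodule.add_mem _ hζm (Submodule.smul_mem _ t hum)
      obtain ⟨A, hA𝔥, k, hk⟩ := hgo (ζ + t • u) hXm
      have hAu : ⁅A, u⁆ ∈ 𝔡 := 𝔡.lie_mem hu
      have hAζm : ⁅A, ζ⁆ ∈ 𝔪 := hred A hA𝔥 ζ hζm
      have hBζuζ : B ⁅ζ, u⁆ ζ = 0 := by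
        rw [hsymm _ (hdm _ hζu) _ hζm]; exact hperp _ hζu
      have hBAuζ : B ⁅A, u⁆ ζ = 0 := by
        rw [hsymm _ (hdm _ hAu) _ hζm]; exact hperp _ hAu
      have hBAuu : B ⁅A, u⁆ u = 0 := by
        have h5 := hinv A hA𝔥 u hum u hum
        have h6 := hsymm u hum ⁅A, u⁆ (hdm _ hAu)
        linarith
      have hBAζζ : B ⁅A, ζ⁆ ζ = 0 := by
        have h5 := hinv A hA𝔥 ζ hζm ζ hζm
        have h6 := hsymm ζ hζm ⁅A, ζ⁆ hAζm
        linarith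
      have hBAζu : B ⁅A, ζ⁆ u = 0 := by
        have h5 := hinv A hA𝔥 ζ hζm u hum
        have h6 : B ζ ⁅A, u⁆ = 0 := hperp _ hAu
        linarith
      have hBζu0 : B ζ u = 0 := hperp u hu
      have huζ : ⁅u, ζ⁆ = -⁅ζ, u⁆ := by rw [← lie_skew ζ u, neg_neg]
      refine ⟨k, ?_, ?_⟩
      · have h1 := hk u hum
        have hbr : ⁅ζ + t • u + A, u⁆ = ⁅ζ, u⁆ + ⁅A, u⁆ := by
          simp [add_lie, smul_lie]
        have hmm : ⁅ζ, u⁆ + ⁅A, u⁆ ∈ 𝔪 := Submodule.add_mem _ (hdm _ hζu) (hdm _ hAu)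
        rw [hbr, hproj _ hmm] at h1
        simp only [map_add, LinearMap.add_apply, map_smul, LinearMap.smul_apply,
          smul_eq_mul, hBζuζ, hBAuζ, hBAuu, hBζu0] at h1
        linarith
      · have h2 := hk ζ hζm
        have hbr : ⁅ζ + t • u + A, ζ⁆ = t • ⁅u, ζ⁆ + ⁅A, ζ⁆ := by
          simp [add_lie, smul_lie]
        have huζ𝔡 : ⁅u, ζ⁆ ∈ 𝔡 := by rw [huζ]; exact neg_mem hζu
        have hmm : t • ⁅u, ζ⁆ + ⁅A, ζ⁆ ∈ 𝔪 :=
          Submodule.add_mem _ (Submodule.smul_mem _ t (hdm _ huζ𝔡)) hAζm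
        rw [hbr, hproj _ hmm] at h2
        have hBuζζ : B ⁅u, ζ⁆ ζ = 0 := by
          rw [hsymm _ (hdm _ huζ𝔡) _ hζm]; exact hperp _ huζ𝔡
        have hBuζu : B ⁅u, ζ⁆ u = -B ⁅ζ, u⁆ u := by
          rw [huζ, map_neg, LinearMap.neg_apply]
        have hBuζ0 : B u ζ = 0 := by rw [hsymm u hum ζ hζm]; exact hBζu0
        simp only [map_add, LinearMap.add_apply, map_smul, LinearMap.smul_apply,
          smul_eq_mul, hBuζζ, hBuζu, hBAζζ, hBAζu, hBuζ0] at h2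
        linarith
    obtain ⟨k1, e11, e12⟩ := key 1
    obtain ⟨k2, e21, e22⟩ := key 2
    have hcp : B ⁅ζ, u⁆ u * B u u = 0 := by
      linear_combination ((B ζ ζ) / 6) * e21 - ((B u u) / 3) * e22 -
        ((B ζ ζ) / 3) * e11 + ((B u u) / 3) * e12
    exact (mul_eq_zero.mp hcp).resolve_right hBuu
  -- Lemma B : skewness
  have hSkew : ∀ ζ, ζ ∈ 𝔪 → (∀ d, d ∈ 𝔡 → B ζ d = 0) →
      ∀ u, u ∈ 𝔡 → ∀ v, v ∈ 𝔡 → B ⁅ζ, u⁆ v + B ⁅ζ, v⁆ u = 0 := by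
    intro ζ hζ hp u hu v hv
    have h1 := hA ζ hζ hp (u + v) (add_mem hu hv)
    have h2 := hA ζ hζ hp u hu
    have h3 := hA ζ hζ hp v hv
    rw [lie_add] at h1
    simp only [map_add, LinearMap.add_apply] at h1
    linarith
  -- Lemma C : kill
  have hKill : ∀ ζ, ζ ∈ 𝔫 → (∀ d, d ∈ 𝔡 → B ζ d = 0) → ∀ u, u ∈ 𝔡 → ⁅ζ, u⁆ = 0 := by
    intro ζ hζ𝔫 hp
    have hζm : ζ ∈ 𝔪 := hmem𝔪 ζ hζ𝔫
    haveI : LieRing.IsNilpotent 𝔫 := hnil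
    obtain ⟨n, hn⟩ := LieAlgebra.nilpotent_ad_of_nilpotent_algebra ℝ 𝔫
    have hcoe : ∀ (m : ℕ) (w : 𝔫),
        ((((LieAlgebra.ad ℝ 𝔫 ⟨ζ, hζ𝔫⟩) ^ m) w : 𝔫) : L)
          = ((LieAlgebra.ad ℝ L ζ) ^ m) (w : L) := by
      intro m
      induction m with
      | zero => intro w; simp
      | succ m ih =>
        intro w
        rw [pow_succ, pow_succ, Module.End.mul_apply, Module.End.mul_apply, ih]
        congr 1
    have main : ∀ (m : ℕ) (u : L), u ∈ 𝔡 → ((LieAlgebra.ad ℝ L ζ) ^ m) u = 0 →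
        ⁅ζ, u⁆ = 0 := by
      intro m
      induction m with
      | zero =>
        intro u hu h0
        simp only [pow_zero, Module.End.one_apply] at h0
        simp [h0]
      | succ m ih =>
        intro u hu h0
        have hζu𝔡 : ⁅ζ, u⁆ ∈ 𝔡 := 𝔡.lie_mem hu
        rw [pow_succ, Module.End.mul_apply, LieAlgebra.ad_apply] at h0
        have h2 : ⁅ζ, ⁅ζ, u⁆⁆ = 0 := ih ⁅ζ, u⁆ hζu𝔡 h0
        have h3 := hSkew ζ hζm hp u hu ⁅ζ, u⁆ hζu𝔡
        rw [h2] at h3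
        simp only [map_zero, LinearMap.zero_apply, add_zero] at h3
        exact hzero _ hζu𝔡 h3
    intro u hu
    have h0 : ((LieAlgebra.ad ℝ L ζ) ^ n) u = 0 := by
      have h := hcoe n ⟨u, hd𝔫 hu⟩
      rw [hn ⟨ζ, hζ𝔫⟩] at h
      simpa using h.symm
    exact main n u hu h0
  -- Lemma D : orthogonal decomposition against 𝔡
  have hDecomp : ∀ x, x ∈ 𝔪 → ∃ d, d ∈ 𝔡 ∧ ∀ w, w ∈ 𝔡 → B (x - d) w = 0 := by
    intro x hx
    set D : Submodule ℝ L := LieSubmodule.toSubmodule 𝔡 with hD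
    have hnd : (B.restrict D).Nondegenerate := by
      constructor <;> intro d hd <;>
      exact Subtype.ext (hzero _ d.2 (hd d))
    let φ : Module.Dual ℝ D := (B x).domRestrict D
    set d' : D := ((B.restrict D).toDual hnd).symm φ with hd'
    refine ⟨(d' : L), d'.2, ?_⟩
    intro w hw
    have h := LinearMap.BilinForm.apply_toDual_symm_apply (B := B.restrict D)
      (hB := hnd) φ ⟨w, hw⟩
    have h2 : B (d' : L) w = B x w := h
    simp only [map_sub, LinearMap.sub_apply]
    rw [h2]
    ring
  -- Lemma E : brackets with 𝔡 reduce to brackets from 𝔡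
  have hred𝔡 : ∀ x, x ∈ 𝔫 → ∀ u, u ∈ 𝔡 → ∃ d, d ∈ 𝔡 ∧ ⁅x, u⁆ = ⁅d, u⁆ := by
    intro x hx u hu
    obtain ⟨d, hd, hperp⟩ := hDecomp x (hmem𝔪 x hx)
    refine ⟨d, hd, ?_⟩
    have hζ𝔫 : x - d ∈ 𝔫 := sub_mem hx (hd𝔫 hd)
    have h0 : ⁅x - d, u⁆ = 0 := hKill (x - d) hζ𝔫 (fun w hw => hperp w hw) u hu
    calc ⁅x, u⁆ = ⁅(x - d) + d, u⁆ := by rw [sub_add_cancel]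
      _ = ⁅x - d, u⁆ + ⁅d, u⁆ := add_lie _ _ _
      _ = ⁅d, u⁆ := by rw [h0, zero_add]
  -- Final argument
  set T : LieIdeal ℝ L := ⁅𝔫, 𝔡⁆ with hT
  have hT𝔫 : T ≤ 𝔫 := le_trans (LieSubmodule.lie_le_right _ _) hd𝔫
  have hTT : T ≤ ⁅𝔫, T⁆ := by
    rw [hT, LieSubmodule.lie_le_iff]
    intro x hx u hu
    obtain ⟨d, hd, heq⟩ := hred𝔡 x hx u hu
    rw [heq]
    have hd2 : d ∈ Submodule.span ℝ {m : L | ∃ y ∈ 𝔫, ∃ z ∈ 𝔫, ⁅y, z⁆ = m} := by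
      rw [← LieSubmodule.lieIdeal_oper_eq_linear_span']
      exact hd
    refine Submodule.span_induction (p := fun a _ => ⁅a, u⁆ ∈ ⁅𝔫, T⁆) ?_ ?_ ?_ ?_ hd2
    · rintro a ⟨y, hy, z, hz, rfl⟩
      rw [lie_lie]
      exact sub_mem (LieSubmodule.lie_mem_lie hy (LieSubmodule.lie_mem_lie hz hu))
        (LieSubmodule.lie_mem_lie hz (LieSubmodule.lie_mem_lie hy hu))
    · simp only [zero_lie]; exact zero_mem _
    · intro a b _ _ ha hb; rw [add_lie]; exact add_mem ha hb
    · intro r a _ ha; rw [smul_lie]; exact SMulMemClass.smul_mem r ha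
  haveI : LieRing.IsNilpotent 𝔫 := hnil
  obtain ⟨k, hk⟩ := LieModule.IsNilpotent.nilpotent ℝ 𝔫 𝔫
  have claim : ∀ (j : ℕ) (x : L) (hx : x ∈ T),
      (⟨x, hT𝔫 hx⟩ : 𝔫) ∈ LieModule.lowerCentralSeries ℝ 𝔫 𝔫 j := by
    intro j
    induction j with
    | zero =>
      intro x hx
      rw [LieModule.lowerCentralSeries_zero]
      exact LieSubmodule.mem_top _
    | succ j ih =>
      intro x hx
      have hx' : x ∈ ⁅𝔫, T⁆ := hTT hx
      have hx2 : x ∈ Submodule.span ℝ {m : L | ∃ y ∈ 𝔫, ∃ t ∈ T, ⁅y, t⁆ = m} := by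
        rw [← LieSubmodule.lieIdeal_oper_eq_linear_span']
        exact hx'
      have hS : x ∈ Submodule.map (LieSubmodule.toSubmodule 𝔫).subtype
          (LieSubmodule.toSubmodule (LieModule.lowerCentralSeries ℝ 𝔫 𝔫 (j + 1))) := by
        refine Submodule.span_induction (p := fun a _ => a ∈ Submodule.map
          (LieSubmodule.toSubmodule 𝔫).subtype
          (LieSubmodule.toSubmodule (LieModule.lowerCentralSeries ℝ 𝔫 𝔫 (j + 1))))
          ?_ ?_ ?_ ?_ hx2
        · rintro a ⟨y, hy, t, ht, rfl⟩
          refine ⟨⁅(⟨y, hy⟩ : 𝔫), (⟨t, hT𝔫 ht⟩ : 𝔫)⁆, ?_, rfl⟩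
          rw [LieModule.lowerCentralSeries_succ]
          exact LieSubmodule.lie_mem_lie (LieSubmodule.mem_top _) (ih t ht)
        · exact zero_mem _
        · intro a b _ _ ha hb; exact add_mem ha hb
        · intro r a _ ha; exact Submodule.smul_mem _ r ha
      obtain ⟨y, hy, hyx⟩ := hS
      have hxy : (⟨x, hT𝔫 hx⟩ : 𝔫) = y := Subtype.ext hyx.symm
      rw [hxy]
      exact hy
  rw [LieSubmodule.eq_bot_iff]
  intro m hm
  have h := claim k m hm
  rw [hk] at h
  simpa using h
end
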